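/- Let n ≥ 10 and consider the dataset in ℝ² consisting of one sample a₁ = (1/2, −1) with label y₁ = 1 and n − 1 samples a_i = (−1/2, −1) with label y_i = −1 (i = 2,…,n). This dataset is separable with margin μ ≥ 1/2 (the unit vector (1,0) certifies it) and R = √5/2. Nevertheless, the Batch Perceptron started from θ̂₀ = 0 does not solve the classification task within ⌊3n/10⌋ iterations: S_t ≠ ∅ for every t with 1 ≤ t ≤ ⌊3n/10⌋. Hence Batch Perceptron requires at least Ω(n) iterations on this dataset. -/

import Mathlib

open scoped BigOperators

/-- The Euclidean dot product on `ℝ²`. -/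
def dot2 (u v : ℝ × ℝ) : ℝ := u.1 * v.1 + u.2 * v.2

/-- **Lower bound for Batch Perceptron.** On the dataset with one sample `(1/2, −1)` of
class `1` and `n − 1` samples `(−1/2, −1)` of class `−1` (which is separable with margin
`≥ 1/2`, certified by the unit vector `(1, 0)`, and has `R = √5 / 2`), the Batch Perceptron
started from `0` still has a misclassified sample at every iteration `t` with
`1 ≤ t ≤ ⌊3n/10⌋`; hence it needs `Ω(n)` iterations. -/
theorem batch_perceptron_lower_bound {n : ℕ} (hn : 10 ≤ n)
    (a : Fin n → ℝ × ℝ) (y : Fin n → ℝ)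
    (ha : ∀ i, a i = if (i : ℕ) = 0 then ((1 / 2 : ℝ), (-1 : ℝ)) else ((-1 / 2 : ℝ), (-1 : ℝ)))
    (hy : ∀ i, y i = if (i : ℕ) = 0 then (1 : ℝ) else (-1 : ℝ))
    (θhat : ℕ → ℝ × ℝ)
    (h0 : θhat 0 = 0)
    (h1 : θhat 1 = θhat 0 + ((1 : ℝ) / (2 * n)) • ∑ i, y i • a i)
    (hstep : ∀ t, 1 ≤ t →
      θhat (t + 1) = θhat t + ((1 : ℝ) / n) •
        ∑ i ∈ Finset.univ.filter (fun i => y i * dot2 (a i) (θhat t) ≤ 0), y i • a i) :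
    (∀ i, (1 / 2 : ℝ) ≤ y i * dot2 (a i) ((1 : ℝ), (0 : ℝ))) ∧
    Real.sqrt (dot2 ((1 : ℝ), (0 : ℝ)) ((1 : ℝ), (0 : ℝ))) = 1 ∧
    (∀ i, Real.sqrt (dot2 (a i) (a i)) = Real.sqrt 5 / 2) ∧
    (∀ t, 1 ≤ t → t ≤ 3 * n / 10 → ∃ i, y i * dot2 (a i) (θhat t) ≤ 0) := by
  have hn0 : 0 < n := by omega
  have hN : (10 : ℝ) ≤ (n : ℝ) := by exact_mod_cast hn
  have hNpos : (0 : ℝ) < (n : ℝ) := by linarith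
  have hNne : (n : ℝ) ≠ 0 := ne_of_gt hNpos
  set N : ℝ := (n : ℝ) with hNdef
  set i0 : Fin n := ⟨0, hn0⟩ with hi0def
  have hival : (i0 : ℕ) = 0 := rfl
  have hveq : ∀ i : Fin n, (i : ℕ) = 0 ↔ i = i0 := by
    intro i
    constructor
    · intro h; apply Fin.ext; simpa using h
    · intro h; subst h; rfl
  -- the values y i • a i
  have hya : ∀ i : Fin n, y i • a i =
      ((1 / 2 : ℝ), if (i : ℕ) = 0 then (-1 : ℝ) else 1) := by
    intro i
    rw [ha i, hy i]
    by_cases h : (i : ℕ) = 0 <;> simp [h, Prod.smul_mk] <;> norm_num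
  -- misclassification value of sample 0 at a point
  have hg0 : ∀ θ : ℝ × ℝ, y i0 * dot2 (a i0) θ = (1/2) * θ.1 - θ.2 := by
    intro θ
    rw [ha i0, hy i0]
    simp [hival, dot2]
    ring
  have hgi : ∀ i : Fin n, i ≠ i0 → ∀ θ : ℝ × ℝ,
      y i * dot2 (a i) θ = (1/2) * θ.1 + θ.2 := by
    intro i hi θ
    have h : ¬ ((i : ℕ) = 0) := fun h => hi ((hveq i).1 h)
    rw [ha i, hy i]
    simp [h, dot2]
    ring
  -- the trajectory formula
  have key : ∀ t : ℕ, 1 ≤ t → t * 10 ≤ 3 * n →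
      θhat t = (1/4 + ((t : ℝ) - 1)/(2*N), 1/2 - 1/N - ((t : ℝ) - 1)/N) := by
    intro t
    induction t with
    | zero => intro h; omega
    | succ t ih =>
      intro _ hle
      rcases Nat.eq_zero_or_pos t with ht0 | ht1
      · -- base case t+1 = 1
        subst ht0
        -- compute the sum
        have hsum : ∑ i, y i • a i = ((N/2 : ℝ), (N - 2 : ℝ)) := by
          have h1' : ∀ i : Fin n, y i • a i =
              ((1/2 : ℝ), 1 - if i = i0 then (2:ℝ) else 0) := by
            intro i
            rw [hya i]
            by_cases h : i = i0
            · subst h; norm_num [hival]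
            · have : ¬ ((i : ℕ) = 0) := fun hh => h ((hveq i).1 hh)
              simp [h, this]
          rw [Finset.sum_congr rfl (fun i _ => h1' i)]
          rw [Prod.ext_iff]
          constructor
          · rw [Prod.fst_sum, Finset.sum_const, Finset.card_univ, Fintype.card_fin,
              nsmul_eq_mul, hNdef]
            ring
          · rw [Prod.snd_sum, Finset.sum_sub_distrib, Finset.sum_const,
              Finset.sum_ite_eq' Finset.univ i0 (fun _ => (2:ℝ)), Finset.card_univ,
              Fintype.card_fin, nsmul_eq_mul, hNdef]
            simp
        rw [h1, h0, hsum]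
        rw [Prod.ext_iff]
        constructor
        · simp [Prod.smul_mk]
          field_simp
          ring
        · simp only [Prod.smul_mk, Prod.snd_add, Prod.snd_zero, smul_eq_mul]
          push_cast
          field_simp
          ring
      · -- inductive step
        have hle' : t * 10 ≤ 3 * n := by omega
        have hth : θhat t = (1/4 + ((t : ℝ) - 1)/(2*N), 1/2 - 1/N - ((t : ℝ) - 1)/N) :=
          ih ht1 hle'
        set s : ℝ := (t : ℝ) - 1 with hsdef
        have hs0 : 0 ≤ s := by
          have : (1 : ℝ) ≤ (t : ℝ) := by exact_mod_cast ht1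
          linarith
        have hsle : 10 * s ≤ 3 * N - 20 := by
          have h' : (((t+1) * 10 : ℕ) : ℝ) ≤ ((3 * n : ℕ) : ℝ) := Nat.cast_le.mpr hle
          push_cast at h'
          simp only [hNdef]
          linarith
        -- the misclassified set is {i0}
        have hset : Finset.univ.filter (fun i => y i * dot2 (a i) (θhat t) ≤ 0) = {i0} := by
          apply Finset.ext
          intro i
          simp only [Finset.mem_filter, Finset.mem_univ, true_and, Finset.mem_singleton]
          constructor
          · intro hcond
            by_contra hne
            rw [hgi i hne (θhat t), hth] at hcond
            simp only at hcond
            have heq : (1/2) * (1/4 + s/(2*N)) + (1/2 - 1/N - s/N) =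
                (5*N - 8 - 6*s) / (8*N) := by
              field_simp
              ring
            rw [heq] at hcond
            have hnum : 0 < 5*N - 8 - 6*s := by linarith
            have : 0 < (5*N - 8 - 6*s) / (8*N) := by positivity
            linarith
          · intro hi
            subst hi
            rw [hg0 (θhat t), hth]
            simp only
            have heq : (1/2) * (1/4 + s/(2*N)) - (1/2 - 1/N - s/N) =
                (10*s - 3*N + 8) / (8*N) := by
              field_simp
              ring
            rw [heq]
            apply div_nonpos_of_nonpos_of_nonneg
            · linarith
            · positivity
        rw [hstep t ht1, hset, Finset.sum_singleton, hya i0, hival, hth]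
        simp only [if_pos rfl]
        rw [Prod.ext_iff]
        push_cast
        constructor
        · simp [Prod.smul_mk]
          field_simp
          ring
        · simp [Prod.smul_mk]
          field_simp
          ring
  refine ⟨?_, ?_, ?_, ?_⟩
  · intro i
    rw [ha i, hy i]
    by_cases h : (i : ℕ) = 0 <;> simp [h, dot2] <;> norm_num
  · simp [dot2]
  · intro i
    rw [ha i]
    have h4 : Real.sqrt 4 = 2 := by
      rw [show (4:ℝ) = 2^2 by norm_num, Real.sqrt_sq (by norm_num)]
    have h54 : Real.sqrt ((5:ℝ)/4) = Real.sqrt 5 / 2 := by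
      rw [Real.sqrt_div (by norm_num : (0:ℝ) ≤ 5) 4, h4]
    by_cases h : (i : ℕ) = 0
    · rw [if_pos h]
      have hd : dot2 ((1/2:ℝ), (-1:ℝ)) ((1/2:ℝ), (-1:ℝ)) = 5/4 := by norm_num [dot2]
      rw [hd, h54]
    · rw [if_neg h]
      have hd : dot2 ((-1/2:ℝ), (-1:ℝ)) ((-1/2:ℝ), (-1:ℝ)) = 5/4 := by norm_num [dot2]
      rw [hd, h54]
  · intro t ht1 ht2
    have hle : t * 10 ≤ 3 * n := by
      have := (Nat.le_div_iff_mul_le (by norm_num : 0 < 10)).1 ht2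
      omega
    refine ⟨i0, ?_⟩
    rw [hg0 (θhat t), key t ht1 hle]
    set s : ℝ := (t : ℝ) - 1 with hsdef
    have hs0 : 0 ≤ s := by
      have : (1 : ℝ) ≤ (t : ℝ) := by exact_mod_cast ht1
      linarith
    have hsle : 10 * s ≤ 3 * N - 10 := by
      have h' : ((t * 10 : ℕ) : ℝ) ≤ ((3 * n : ℕ) : ℝ) := Nat.cast_le.mpr hle
      push_cast at h'
      simp only [hNdef, hsdef]
      linarith
    simp only
    have heq : (1/2) * (1/4 + s/(2*N)) - (1/2 - 1/N - s/N) =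
        (10*s - 3*N + 8) / (8*N) := by
      field_simp
      ring
    rw [heq]
    apply div_nonpos_of_nonpos_of_nonneg
    · linarith
    · positivity
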